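/- Let x₁, x₂, y₁, …, yₙ be positive real numbers satisfying x₁ > y_k for all k ∈ {1, …, n}. Then the function f(t) = cosh(x₁ t) + cosh(x₂ t) − Σ_{k=1}^n cosh(y_k t) has at most one zero in (0, ∞). -/

import Mathlib

open Real Set Finset

noncomputable def icosh (v : ℝ) : ℝ := Real.log (v + Real.sqrt (v^2 - 1))

lemma icosh_cosh {w : ℝ} (hw : 0 ≤ w) : icosh (Real.cosh w) = w := by
  unfold icosh
  have h1 : Real.cosh w ^ 2 - 1 = Real.sinh w ^ 2 := by
    have := Real.cosh_sq w; linarith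
  rw [h1, Real.sqrt_sq (Real.sinh_nonneg_iff.2 hw), Real.cosh_add_sinh, Real.log_exp]

lemma icosh_arg_pos {v : ℝ} (hv : 1 ≤ v) : 0 < v + Real.sqrt (v^2-1) := by
  have := Real.sqrt_nonneg (v^2-1); linarith

lemma cosh_icosh {v : ℝ} (hv : 1 ≤ v) : Real.cosh (icosh v) = v := by
  unfold icosh
  have hs := Real.sqrt_nonneg (v^2-1)
  have hpos : 0 < v + Real.sqrt (v^2-1) := icosh_arg_pos hv
  have hsq : Real.sqrt (v^2-1) ^ 2 = v^2 - 1 := Real.sq_sqrt (by nlinarith)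
  rw [Real.cosh_eq, Real.exp_log hpos, Real.exp_neg, Real.exp_log hpos]
  have hinv : (v + Real.sqrt (v^2-1))⁻¹ = v - Real.sqrt (v^2-1) := by
    rw [inv_eq_iff_eq_inv, eq_comm, inv_eq_iff_eq_inv]
    · field_simp
      nlinarith
  rw [hinv]; ring

lemma sinh_icosh {v : ℝ} (hv : 1 ≤ v) : Real.sinh (icosh v) = Real.sqrt (v^2-1) := by
  unfold icosh
  have hpos : 0 < v + Real.sqrt (v^2-1) := icosh_arg_pos hv
  have hsq : Real.sqrt (v^2-1) ^ 2 = v^2 - 1 := Real.sq_sqrt (by nlinarith)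
  rw [Real.sinh_eq, Real.exp_log hpos, Real.exp_neg, Real.exp_log hpos]
  have hinv : (v + Real.sqrt (v^2-1))⁻¹ = v - Real.sqrt (v^2-1) := by
    rw [inv_eq_iff_eq_inv, eq_comm, inv_eq_iff_eq_inv]
    · field_simp
      nlinarith
  rw [hinv]; ring

lemma icosh_nonneg {v : ℝ} (hv : 1 ≤ v) : 0 ≤ icosh v := by
  unfold icosh
  have := Real.sqrt_nonneg (v^2-1)
  exact Real.log_nonneg (by linarith)

lemma icosh_pos {v : ℝ} (hv : 1 < v) : 0 < icosh v := by
  unfold icosh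
  have := Real.sqrt_nonneg (v^2-1)
  exact Real.log_pos (by linarith)

lemma icosh_one : icosh 1 = 0 := by
  unfold icosh; norm_num

lemma icosh_lt_icosh {v w : ℝ} (hv : 1 ≤ v) (hvw : v < w) : icosh v < icosh w := by
  by_contra h
  push_neg at h
  have h1 : Real.cosh (icosh w) ≤ Real.cosh (icosh v) := by
    rw [Real.cosh_le_cosh]
    rw [abs_of_nonneg (icosh_nonneg (by linarith)), abs_of_nonneg (icosh_nonneg hv)]
    exact h
  rw [cosh_icosh hv, cosh_icosh (by linarith)] at h1
  linarith

lemma hasDerivAt_icosh {v : ℝ} (hv : 1 < v) :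
    HasDerivAt icosh (1 / Real.sqrt (v^2-1)) v := by
  have h2 : (0:ℝ) < v^2 - 1 := by nlinarith
  have hs : 0 < Real.sqrt (v^2-1) := Real.sqrt_pos.2 h2
  have hsq : HasDerivAt (fun x : ℝ => x^2 - 1) (2*v) v := by
    simpa using ((hasDerivAt_pow 2 v).sub_const 1)
  have hroot : HasDerivAt (fun x : ℝ => Real.sqrt (x^2-1)) (1/(2*Real.sqrt (v^2-1)) * (2*v)) v :=
    (Real.hasDerivAt_sqrt (ne_of_gt h2)).comp v hsq
  have hsum : HasDerivAt (fun x : ℝ => x + Real.sqrt (x^2-1))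
      (1 + 1/(2*Real.sqrt (v^2-1)) * (2*v)) v := (hasDerivAt_id v).add hroot
  have hlog := hsum.log (ne_of_gt (icosh_arg_pos hv.le))
  have : (1 + 1/(2*Real.sqrt (v^2-1)) * (2*v)) / (v + Real.sqrt (v^2-1))
      = 1 / Real.sqrt (v^2-1) := by
    have hvs : 0 < v + Real.sqrt (v^2-1) := icosh_arg_pos hv.le
    have h' : Real.sqrt (v^2-1) ^ 2 = v^2-1 := Real.sq_sqrt h2.le
    field_simp
    nlinarith
  rw [this] at hlog
  exact hlog

section theta
variable {θ : ℝ} (hθ : 1 < θ)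

-- core positivity: D(u) = θ cosh(θu) sinh u − sinh(θu) cosh u > 0 for u > 0
lemma Dpos (hθ : 1 < θ) {u : ℝ} (hu : 0 < u) :
    0 < θ * Real.cosh (θ*u) * Real.sinh u - Real.sinh (θ*u) * Real.cosh u := by
  set D : ℝ → ℝ := fun u => θ * Real.cosh (θ*u) * Real.sinh u - Real.sinh (θ*u) * Real.cosh u with hD
  have hderiv : ∀ x : ℝ, HasDerivAt D ((θ^2 - 1) * (Real.sinh (θ*x) * Real.sinh x)) x := by
    intro x
    have hlin : HasDerivAt (fun y : ℝ => θ * y) θ x := by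
      simpa using (hasDerivAt_id x).const_mul θ
    have h1 : HasDerivAt (fun x : ℝ => Real.cosh (θ*x)) (Real.sinh (θ*x) * θ) x :=
      (Real.hasDerivAt_cosh (θ*x)).comp x hlin
    have h2 : HasDerivAt (fun x : ℝ => Real.sinh (θ*x)) (Real.cosh (θ*x) * θ) x :=
      (Real.hasDerivAt_sinh (θ*x)).comp x hlin
    have h3 : HasDerivAt D
        ((θ * (Real.sinh (θ*x) * θ)) * Real.sinh x + (θ * Real.cosh (θ*x)) * Real.cosh x
          - ((Real.cosh (θ*x) * θ) * Real.cosh x + Real.sinh (θ*x) * Real.sinh x)) x := by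
      exact ((h1.const_mul θ).mul (Real.hasDerivAt_sinh x)).sub
        (h2.mul (Real.hasDerivAt_cosh x))
    convert h3 using 1; ring
  have hmono : StrictMonoOn D (Set.Ici 0) := by
    apply strictMonoOn_of_deriv_pos (convex_Ici 0)
    · exact (Continuous.continuousOn (by continuity))
    · intro x hx
      rw [interior_Ici] at hx
      rw [(hderiv x).deriv]
      have hsθ : 0 < Real.sinh (θ*x) := Real.sinh_pos_iff.2 (mul_pos (by linarith) hx)
      have hsx : 0 < Real.sinh x := Real.sinh_pos_iff.2 hx
      have hθ2 : (0:ℝ) < θ^2 - 1 := by nlinarith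
      exact mul_pos hθ2 (mul_pos hsθ hsx)
  have h0 : D 0 = 0 := by simp [hD]
  have := hmono (Set.self_mem_Ici) (Set.mem_Ici.2 hu.le) hu
  rwa [h0] at this

-- ratio monotonicity
lemma Rmono (hθ : 1 < θ) {p q : ℝ} (hp : 0 < p) (hpq : p < q) :
    Real.sinh (θ*p) / Real.sinh p < Real.sinh (θ*q) / Real.sinh q := by
  have hsp : 0 < Real.sinh p := Real.sinh_pos_iff.2 hp
  have hsq : 0 < Real.sinh q := Real.sinh_pos_iff.2 (hp.trans hpq)
  rw [div_lt_div_iff₀ hsp hsq]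
  -- sinh(θp) sinh q < sinh(θq) sinh p ... show via R monotone: use derivative on Ioi 0
  set R : ℝ → ℝ := fun u => Real.sinh (θ*u) / Real.sinh u with hR
  have hmono : StrictMonoOn R (Set.Ioi 0) := by
    apply strictMonoOn_of_deriv_pos (convex_Ioi 0)
    · apply ContinuousOn.div
      · exact (Continuous.continuousOn (by continuity))
      · exact (Continuous.continuousOn (by continuity))
      · intro x hx; exact ne_of_gt (Real.sinh_pos_iff.2 hx)
    · intro x hx
      rw [interior_Ioi] at hx
      have hsx : 0 < Real.sinh x := Real.sinh_pos_iff.2 hx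
      have hlin : HasDerivAt (fun y : ℝ => θ * y) θ x := by
        simpa using (hasDerivAt_id x).const_mul θ
      have h2 : HasDerivAt (fun x : ℝ => Real.sinh (θ*x)) (Real.cosh (θ*x) * θ) x :=
        (Real.hasDerivAt_sinh (θ*x)).comp x hlin
      have hd : HasDerivAt R ((Real.cosh (θ*x) * θ * Real.sinh x
          - Real.sinh (θ*x) * Real.cosh x) / Real.sinh x ^ 2) x :=
        h2.div (Real.hasDerivAt_sinh x) (ne_of_gt hsx)
      rw [hd.deriv]
      have := Dpos hθ hx
      apply div_pos (by linarith) (by positivity)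
  have := hmono (Set.mem_Ioi.2 hp) (Set.mem_Ioi.2 (hp.trans hpq)) hpq
  rw [hR] at this
  simp only [div_lt_div_iff₀ hsp hsq] at this
  exact this

noncomputable def Phi (θ : ℝ) : ℝ → ℝ := fun v => Real.cosh (θ * icosh v)

lemma hasDerivAt_Phi (hθ : 1 < θ) {v : ℝ} (hv : 1 < v) :
    HasDerivAt (Phi θ) (θ * (Real.sinh (θ * icosh v) / Real.sinh (icosh v))) v := by
  have h1 : HasDerivAt (fun v => θ * icosh v) (θ * (1 / Real.sqrt (v^2-1))) v :=
    (hasDerivAt_icosh hv).const_mul θ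
  have h2 : HasDerivAt (Phi θ) (Real.sinh (θ * icosh v) * (θ * (1 / Real.sqrt (v^2-1)))) v :=
    (Real.hasDerivAt_cosh (θ * icosh v)).comp v h1
  have h3 : Real.sqrt (v^2-1) = Real.sinh (icosh v) := (sinh_icosh hv.le).symm
  rw [h3] at h2
  convert h2 using 1; ring

lemma continuousOn_Phi : ContinuousOn (Phi θ) (Set.Ici 1) := by
  apply Real.continuous_cosh.comp_continuousOn
  have hlog : ContinuousOn icosh (Set.Ici 1) := by
    apply ContinuousOn.log
    · exact (Continuous.continuousOn (by continuity))
    · intro x hx; exact ne_of_gt (icosh_arg_pos hx)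
  exact continuousOn_const.mul hlog

lemma strictConvexOn_Phi (hθ : 1 < θ) : StrictConvexOn ℝ (Set.Ici 1) (Phi θ) := by
  apply StrictMonoOn.strictConvexOn_of_deriv (convex_Ici 1) continuousOn_Phi
  rw [interior_Ici]
  intro v hv w hw hvw
  rw [(hasDerivAt_Phi hθ hv).deriv, (hasDerivAt_Phi hθ hw).deriv]
  have := Rmono hθ (icosh_pos hv) (icosh_lt_icosh (le_of_lt hv) hvw)
  exact mul_lt_mul_of_pos_left this (by linarith)

end theta

section abstractH
variable {H : ℝ → ℝ}
  (hconv : StrictConvexOn ℝ (Set.Ici 0) H)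
  (h0 : H 0 = 0)
  (hpos : ∀ s : ℝ, 0 ≤ s → 0 ≤ H s)

include hconv h0 hpos

lemma H_pos {b : ℝ} (hb : 0 < b) : 0 < H b := by
  rcases (hpos b hb.le).eq_or_lt with h | h
  · exfalso
    have hmid := hconv.2 (Set.self_mem_Ici) (Set.mem_Ici.2 hb.le) (ne_of_lt hb)
      (by norm_num : (0:ℝ) < 1/2) (by norm_num : (0:ℝ) < 1/2) (by norm_num)
    simp only [smul_eq_mul, mul_zero, zero_add, h0] at hmid
    have h2 : 0 ≤ H ((1/2 : ℝ) * b) := hpos _ (by linarith)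
    nlinarith
  · exact h

lemma H_strictMono {a b : ℝ} (ha : 0 ≤ a) (hab : a < b) : H a < H b := by
  rcases ha.eq_or_lt with h | h
  · rw [← h, h0]; exact H_pos hconv h0 hpos (h ▸ hab)
  · have hb : 0 < b := h.trans hab
    have hlam0 : 0 < a / b := div_pos h hb
    have hlam1 : 0 < 1 - a / b := by
      have : a / b < 1 := (div_lt_one hb).2 hab
      linarith
    have hcomb := hconv.2 (Set.mem_Ici.2 hb.le) (Set.self_mem_Ici) (ne_of_gt hb)
      hlam0 hlam1 (by ring)
    simp only [smul_eq_mul, mul_zero, add_zero, h0] at hcomb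
    have harg : a / b * b = a := div_mul_cancel₀ a (ne_of_gt hb)
    rw [harg] at hcomb
    have hHb := hpos b hb.le
    nlinarith

lemma H_mono {a b : ℝ} (ha : 0 ≤ a) (hab : a ≤ b) : H a ≤ H b := by
  rcases hab.eq_or_lt with h | h
  · rw [h]
  · exact (H_strictMono hconv h0 hpos ha h).le

lemma H_superadd_strict {x y : ℝ} (hx : 0 < x) (hy : 0 < y) : H x + H y < H (x + y) := by
  have hc : 0 < x + y := by linarith
  have h1 := hconv.2 (Set.mem_Ici.2 hc.le) (Set.self_mem_Ici) (ne_of_gt hc)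
    (div_pos hx hc) (div_pos hy hc) (by field_simp)
  have h2 := hconv.2 (Set.mem_Ici.2 hc.le) (Set.self_mem_Ici) (ne_of_gt hc)
    (div_pos hy hc) (div_pos hx hc) (by field_simp; ring)
  simp only [smul_eq_mul, mul_zero, add_zero, h0] at h1 h2
  rw [div_mul_cancel₀ x (ne_of_gt hc)] at h1
  rw [div_mul_cancel₀ y (ne_of_gt hc)] at h2
  have : x / (x+y) * H (x+y) + y / (x+y) * H (x+y) = H (x+y) := by
    field_simp
  linarith

lemma H_superadd {x y : ℝ} (hx : 0 ≤ x) (hy : 0 ≤ y) : H x + H y ≤ H (x + y) := by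
  rcases hx.eq_or_lt with h | h
  · rw [← h, h0, zero_add, zero_add]
  · rcases hy.eq_or_lt with h' | h'
    · rw [← h', h0, add_zero, add_zero]
    · exact (H_superadd_strict hconv h0 hpos h h').le

lemma H_sum_superadd {ι : Type*} (t : Finset ι) (f : ι → ℝ) (hf : ∀ i ∈ t, 0 ≤ f i) :
    ∑ i ∈ t, H (f i) ≤ H (∑ i ∈ t, f i) := by
  induction t using Finset.cons_induction with
  | empty => simp [h0]
  | cons a t ha ih =>
    rw [Finset.sum_cons, Finset.sum_cons]
    have h1 := ih (fun i hi => hf i (Finset.mem_cons_of_mem hi))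
    have h2 := H_superadd hconv h0 hpos (hf a (Finset.mem_cons_self a t))
      (Finset.sum_nonneg (fun i hi => hf i (Finset.mem_cons_of_mem hi)))
    linarith

lemma H_sum_superadd_strict {ι : Type*} [DecidableEq ι] (t : Finset ι) (f : ι → ℝ)
    (hf : ∀ i ∈ t, 0 ≤ f i) (hS : 0 < ∑ i ∈ t, f i)
    (hlt : ∀ i ∈ t, f i < ∑ i ∈ t, f i) :
    ∑ i ∈ t, H (f i) < H (∑ i ∈ t, f i) := by
  obtain ⟨j, hj, hjpos⟩ : ∃ j ∈ t, 0 < f j := by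
    by_contra h
    push_neg at h
    have : ∑ i ∈ t, f i ≤ 0 := Finset.sum_nonpos h
    linarith
  have hrest : ∑ i ∈ t.erase j, f i = (∑ i ∈ t, f i) - f j := by
    rw [← Finset.add_sum_erase t f hj]; ring
  have hrestpos : 0 < ∑ i ∈ t.erase j, f i := by
    rw [hrest]; linarith [hlt j hj]
  have h1 : ∑ i ∈ t.erase j, H (f i) ≤ H (∑ i ∈ t.erase j, f i) :=
    H_sum_superadd hconv h0 hpos _ _ (fun i hi => hf i (Finset.mem_of_mem_erase hi))
  have h2 := H_superadd_strict hconv h0 hpos hjpos hrestpos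
  rw [← Finset.add_sum_erase t (fun i => H (f i)) hj, ← Finset.add_sum_erase t f hj]
  linarith

lemma H_transfer2 {p q a b : ℝ} (hp : 0 ≤ p) (hq : 0 ≤ q) (hpa : p < a) (hqa : q < a)
    (hb : 0 ≤ b) (hsum : p + q = a + b) : H p + H q < H a + H b := by
  have hbp : b < p := by linarith
  have hbq : b < q := by linarith
  have hba : b < a := by linarith
  set lam := (p - b) / (a - b) with hlam
  have hab : 0 < a - b := by linarith
  have hlam0 : 0 < lam := div_pos (by linarith) hab
  have hlam1 : 0 < 1 - lam := by
    have : lam < 1 := (div_lt_one hab).2 (by linarith)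
    linarith
  have ha0 : a ∈ Set.Ici (0:ℝ) := Set.mem_Ici.2 (by linarith)
  have hb0 : b ∈ Set.Ici (0:ℝ) := Set.mem_Ici.2 hb
  have hne : a ≠ b := by linarith
  have hl : lam * (a - b) = p - b := div_mul_cancel₀ _ (ne_of_gt hab)
  have e1 : lam * a + (1 - lam) * b = p := by linear_combination hl
  have e2 : (1 - lam) * a + lam * b = q := by linear_combination -hl - hsum
  have h1 := hconv.2 ha0 hb0 hne hlam0 hlam1 (by ring)
  have h2 := hconv.2 ha0 hb0 hne hlam1 hlam0 (by ring)
  simp only [smul_eq_mul] at h1 h2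
  rw [e1] at h1
  rw [e2] at h2
  linarith

lemma H_mainQ (A : ℝ) (hA : 0 < A) :
    ∀ (n : ℕ) (s : Fin n → ℝ) (B : ℝ), 0 ≤ B → (∀ k, 0 ≤ s k) → (∀ k, s k < A) →
      (∑ k, s k) ≤ A + B → (∑ k, H (s k)) < H A + H B := by
  intro n
  induction n with
  | zero =>
    intro s B hB _ _ _
    simp only [Finset.univ_eq_empty, Finset.sum_empty]
    have := H_pos hconv h0 hpos hA
    have := hpos B hB
    linarith
  | succ m ih =>
    intro s B hB h0s hsA hsum
    rw [Fin.sum_univ_succ] at hsum ⊢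
    set p := s 0 with hp
    set T' := ∑ k : Fin m, s k.succ with hT'
    have hT'0 : 0 ≤ T' := Finset.sum_nonneg (fun i _ => h0s i.succ)
    have hp0 : 0 ≤ p := h0s 0
    have hpA : p < A := hsA 0
    rcases lt_trichotomy T' A with hlt | heq | hgt
    · -- T' < A
      have hTail : ∑ k : Fin m, H (s k.succ) ≤ H T' :=
        H_sum_superadd hconv h0 hpos _ _ (fun i _ => h0s i.succ)
      by_cases hpq : A < p + T'
      · have hb'' : 0 ≤ p + T' - A := by linarith
        have h2 := H_transfer2 hconv h0 hpos hp0 hT'0 hpA hlt hb''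
          (by ring : p + T' = A + (p + T' - A))
        have h3 : H (p + T' - A) ≤ H B := H_mono hconv h0 hpos hb'' (by linarith)
        linarith
      · push_neg at hpq
        have hkey : H p + H T' < H A := by
          rcases hp0.eq_or_lt with hpz | hpz
          · rw [← hpz, h0]
            have := H_strictMono hconv h0 hpos hT'0 hlt
            linarith
          · rcases hT'0.eq_or_lt with hTz | hTz
            · rw [← hTz, h0]
              have := H_strictMono hconv h0 hpos hp0 hpA
              linarith
            · have h1 := H_superadd_strict hconv h0 hpos hpz hTz
              have h2 : H (p + T') ≤ H A := H_mono hconv h0 hpos (by linarith) hpq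
              linarith
        have := hpos B hB
        linarith
    · -- T' = A
      have htail : ∑ k : Fin m, H (s k.succ) < H T' := by
        apply H_sum_superadd_strict hconv h0 hpos _ _ (fun i _ => h0s i.succ)
        · rw [← hT']; rw [heq]; exact hA
        · intro i _
          calc s i.succ < A := hsA i.succ
          _ = T' := heq.symm
      have hpB : H p ≤ H B := H_mono hconv h0 hpos hp0 (by linarith)
      have := H_pos hconv h0 hpos hA
      rw [heq] at htail
      linarith
    · -- T' > A
      have hB' : 0 ≤ T' - A := by linarith
      have ih' := ih (fun k => s k.succ) (T' - A) hB' (fun k => h0s k.succ)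
        (fun k => hsA k.succ) (by linarith)
      have h1 : H p + H (T' - A) ≤ H (p + (T' - A)) := H_superadd hconv h0 hpos hp0 hB'
      have h2 : H (p + (T' - A)) ≤ H B := H_mono hconv h0 hpos (by linarith) (by linarith)
      linarith

end abstractH


noncomputable def Hθ (θ : ℝ) : ℝ → ℝ := fun s => Phi θ (1 + s) - (1 + s)

lemma Hθ_zero (θ : ℝ) : Hθ θ 0 = 0 := by
  unfold Hθ Phi
  rw [add_zero, icosh_one, mul_zero, Real.cosh_zero]
  ring

lemma Hθ_ident (θ : ℝ) {w : ℝ} (hw : 0 ≤ w) :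
    Hθ θ (Real.cosh w - 1) = Real.cosh (θ*w) - Real.cosh w := by
  unfold Hθ Phi
  have h1 : (1:ℝ) + (Real.cosh w - 1) = Real.cosh w := by ring
  rw [h1, icosh_cosh hw]

lemma Hθ_nonneg {θ : ℝ} (hθ : 1 < θ) {s : ℝ} (hs : 0 ≤ s) : 0 ≤ Hθ θ s := by
  unfold Hθ Phi
  have h1 : (1:ℝ) ≤ 1 + s := by linarith
  have hu : 0 ≤ icosh (1 + s) := icosh_nonneg h1
  have h2 : Real.cosh (icosh (1+s)) ≤ Real.cosh (θ * icosh (1+s)) := by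
    rw [Real.cosh_le_cosh, abs_of_nonneg hu, abs_of_nonneg (by nlinarith)]
    nlinarith
  rw [cosh_icosh h1] at h2
  linarith

lemma Hθ_conv {θ : ℝ} (hθ : 1 < θ) : StrictConvexOn ℝ (Set.Ici 0) (Hθ θ) := by
  constructor
  · exact convex_Ici 0
  · intro x hx y hy hne a b ha hb hab
    simp only [smul_eq_mul]
    have hx1 : (1:ℝ) + x ∈ Set.Ici (1:ℝ) := by simp only [Set.mem_Ici] at hx ⊢; linarith
    have hy1 : (1:ℝ) + y ∈ Set.Ici (1:ℝ) := by simp only [Set.mem_Ici] at hy ⊢; linarith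
    have hne1 : (1:ℝ) + x ≠ 1 + y := fun h => hne (by linarith)
    have hP := (strictConvexOn_Phi hθ).2 hx1 hy1 hne1 ha hb hab
    simp only [smul_eq_mul] at hP
    have harg : a * (1+x) + b * (1+y) = 1 + (a*x + b*y) := by linear_combination hab
    rw [harg] at hP
    unfold Hθ
    nlinarith [hP]

lemma no_two_zeros (n : ℕ) (x₁ x₂ : ℝ) (y : Fin n → ℝ)
    (hx₁ : 0 < x₁) (hx₂ : 0 < x₂) (hy : ∀ k, 0 < y k) (hxy : ∀ k, x₁ > y k)
    (t₀ t₁ : ℝ) (ht₀ : 0 < t₀) (ht : t₀ < t₁)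
    (e₀ : Real.cosh (x₁ * t₀) + Real.cosh (x₂ * t₀) - ∑ k, Real.cosh (y k * t₀) = 0)
    (e₁ : Real.cosh (x₁ * t₁) + Real.cosh (x₂ * t₁) - ∑ k, Real.cosh (y k * t₁) = 0) :
    False := by
  have ht₁ : 0 < t₁ := ht₀.trans ht
  by_cases hn : n < 2
  · interval_cases n
    · simp only [Finset.univ_eq_empty, Finset.sum_empty] at e₀
      have h1 := Real.one_le_cosh (x₁ * t₀)
      have h2 := Real.one_le_cosh (x₂ * t₀)
      linarith
    · rw [Fin.sum_univ_one] at e₀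
      have h1 : Real.cosh (y 0 * t₀) < Real.cosh (x₁ * t₀) := by
        rw [Real.cosh_lt_cosh, abs_of_pos (mul_pos (hy 0) ht₀), abs_of_pos (mul_pos hx₁ ht₀)]
        exact mul_lt_mul_of_pos_right (hxy 0) ht₀
      have h2 : 1 < Real.cosh (x₂ * t₀) := Real.one_lt_cosh.2 (ne_of_gt (mul_pos hx₂ ht₀))
      linarith
  · push_neg at hn
    set θ := t₁ / t₀ with hθdef
    have hθ : 1 < θ := (one_lt_div ht₀).2 ht
    set A := Real.cosh (x₁ * t₀) - 1 with hAdef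
    set B := Real.cosh (x₂ * t₀) - 1 with hBdef
    set s : Fin n → ℝ := fun k => Real.cosh (y k * t₀) - 1 with hsdef
    have hA : 0 < A := by
      have := Real.one_lt_cosh.2 (ne_of_gt (mul_pos hx₁ ht₀)); simp only [hAdef]; linarith
    have hB : 0 ≤ B := by
      have := Real.one_le_cosh (x₂ * t₀); simp only [hBdef]; linarith
    have hs0 : ∀ k, 0 ≤ s k := fun k => by
      have := Real.one_le_cosh (y k * t₀); simp only [hsdef]; linarith
    have hsA : ∀ k, s k < A := fun k => by
      have h1 : Real.cosh (y k * t₀) < Real.cosh (x₁ * t₀) := by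
        rw [Real.cosh_lt_cosh, abs_of_pos (mul_pos (hy k) ht₀), abs_of_pos (mul_pos hx₁ ht₀)]
        exact mul_lt_mul_of_pos_right (hxy k) ht₀
      simp only [hsdef, hAdef]; linarith
    have hsum : (∑ k, s k) ≤ A + B := by
      have hsum' : (∑ k, s k) = (∑ k, Real.cosh (y k * t₀)) - n := by
        simp only [hsdef]
        rw [Finset.sum_sub_distrib, Finset.sum_const, Finset.card_univ, Fintype.card_fin]
        simp
      have hcast : (2:ℝ) ≤ (n:ℝ) := by exact_mod_cast hn
      rw [hsum']
      simp only [hAdef, hBdef]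
      linarith
    have main := H_mainQ (Hθ_conv hθ) (Hθ_zero θ) (fun s hs => Hθ_nonneg hθ hs)
      A hA n s B hB hs0 hsA hsum
    -- rewrite the H-values
    have hmul : ∀ u : ℝ, θ * (u * t₀) = u * t₁ := by
      intro u; rw [hθdef]; field_simp
    have hHA : Hθ θ A = Real.cosh (x₁ * t₁) - Real.cosh (x₁ * t₀) := by
      rw [hAdef, Hθ_ident θ (le_of_lt (mul_pos hx₁ ht₀)), hmul]
    have hHB : Hθ θ B = Real.cosh (x₂ * t₁) - Real.cosh (x₂ * t₀) := by
      rw [hBdef, Hθ_ident θ (le_of_lt (mul_pos hx₂ ht₀)), hmul]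
    have hHs : ∀ k, Hθ θ (s k) = Real.cosh (y k * t₁) - Real.cosh (y k * t₀) := fun k => by
      rw [hsdef, Hθ_ident θ (le_of_lt (mul_pos (hy k) ht₀)), hmul]
    rw [hHA, hHB] at main
    have hsum2 : (∑ k, Hθ θ (s k)) = (∑ k, Real.cosh (y k * t₁)) - ∑ k, Real.cosh (y k * t₀) := by
      rw [Finset.sum_congr rfl (fun k _ => hHs k), Finset.sum_sub_distrib]
    rw [hsum2] at main
    linarith

theorem cosh_sum_at_most_one_zero (n : ℕ) (x₁ x₂ : ℝ) (y : Fin n → ℝ)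
    (hx₁ : 0 < x₁) (hx₂ : 0 < x₂) (hy : ∀ k, 0 < y k) (hxy : ∀ k, x₁ > y k) :
    Set.Subsingleton {t : ℝ | t ∈ Set.Ioi (0 : ℝ) ∧
      Real.cosh (x₁ * t) + Real.cosh (x₂ * t) - ∑ k, Real.cosh (y k * t) = 0} := by
  intro a ha b hb
  simp only [Set.mem_setOf_eq, Set.mem_Ioi] at ha hb
  rcases lt_trichotomy a b with h | h | h
  · exact (no_two_zeros n x₁ x₂ y hx₁ hx₂ hy hxy a b ha.1 h ha.2 hb.2).elim
  · exact h
  · exact (no_two_zeros n x₁ x₂ y hx₁ hx₂ hy hxy b a hb.1 h hb.2 ha.2).elim
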